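/- arXiv:2605.29673 — 3 statements merged into one kernel-verified Lean document; each statement's English description precedes it below -/
import Mathlib

section
/- Let E be a finite-dimensional real inner product space, let S_1, …, S_K be linear subspaces of E, and fix a class index y. Let z ∈ E admit a decomposition z = s + e with s ∈ S_y, ‖e‖ ≤ ε, and ‖s‖ ≥ γ > 0. Let α ∈ (0, π/2] be such that for every j ≠ y and every unit vector u ∈ S_y, ‖P_{S_j} u‖ ≤ cos α. Then dist(z, S_y) ≤ ε, for every j ≠ y one has dist(z, S_j) ≥ γ · sin α − ε, and consequently for every j ≠ y, dist(z, S_j) − dist(z, S_y) ≥ γ · sin α − 2ε. -/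
/-- **Subspace residual margin lower bound (Theorem 5, quantitative part).**
If `z = s + e` with `s ∈ S_y`, `‖e‖ ≤ ε`, `‖s‖ ≥ γ > 0`, and every unit vector
`u ∈ S_y` satisfies `‖P_{S_j} u‖ ≤ cos α` for all `j ≠ y` (with `α ∈ (0, π/2]`), then
`dist(z, S_y) ≤ ε`, `dist(z, S_j) ≥ γ sin α − ε` for all `j ≠ y`, and consequently
`dist(z, S_j) − dist(z, S_y) ≥ γ sin α − 2ε` for all `j ≠ y`. -/
theorem stmt_9 {E : Type*} [NormedAddCommGroup E] [InnerProductSpace ℝ E]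
    [FiniteDimensional ℝ E]
    (K : ℕ) (S : Fin K → Submodule ℝ E) (y : Fin K)
    (z s e : E) (ε γ α : ℝ)
    (hz : z = s + e) (hs : s ∈ S y) (he : ‖e‖ ≤ ε)
    (hγ : 0 < γ) (hsγ : ‖s‖ ≥ γ)
    (hα0 : 0 < α) (hα1 : α ≤ Real.pi / 2)
    (hang : ∀ j, j ≠ y → ∀ u : E, u ∈ S y → ‖u‖ = 1 →
      ‖(Submodule.orthogonalProjectionOnto (S j) u : E)‖ ≤ Real.cos α) :
    Metric.infDist z (S y : Set E) ≤ ε ∧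
      (∀ j, j ≠ y → Metric.infDist z (S j : Set E) ≥ γ * Real.sin α - ε) ∧
      (∀ j, j ≠ y →
        Metric.infDist z (S j : Set E) - Metric.infDist z (S y : Set E) ≥
          γ * Real.sin α - 2 * ε) := by
  have hsin : 0 ≤ Real.sin α := Real.sin_nonneg_of_nonneg_of_le_pi hα0.le
    (hα1.trans (by linarith [Real.pi_pos]))
  have hs0 : 0 < ‖s‖ := lt_of_lt_of_le hγ hsγ
  -- first claim
  have h1 : Metric.infDist z (S y : Set E) ≤ ε := by
    calc Metric.infDist z (S y : Set E) ≤ dist z s := Metric.infDist_le_dist_of_mem hs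
    _ = ‖e‖ := by rw [hz, dist_eq_norm]; simp
    _ ≤ ε := he
  -- lower bound on dist(s, S j)
  have h2 : ∀ j, j ≠ y → Metric.infDist z (S j : Set E) ≥ γ * Real.sin α - ε := by
    intro j hj
    set u : E := ‖s‖⁻¹ • s with hu
    have hum : u ∈ S y := Submodule.smul_mem _ _ hs
    have hun : ‖u‖ = 1 := by
      rw [hu, norm_smul, norm_inv, norm_norm, inv_mul_cancel₀ hs0.ne']
    have hproj : ‖(Submodule.orthogonalProjectionOnto (S j) s : E)‖ ≤ ‖s‖ * Real.cos α := by
      have := hang j hj u hum hun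
      have hsu : s = ‖s‖ • u := by
        rw [hu, smul_smul, mul_inv_cancel₀ hs0.ne', one_smul]
      calc ‖(Submodule.orthogonalProjectionOnto (S j) s : E)‖
          = ‖s‖ * ‖(Submodule.orthogonalProjectionOnto (S j) u : E)‖ := by
            conv_lhs => rw [hsu]
            rw [map_smul, Submodule.coe_smul, norm_smul, Real.norm_eq_abs,
              abs_of_pos hs0]
        _ ≤ ‖s‖ * Real.cos α := mul_le_mul_of_nonneg_left this hs0.le
    have hpyth := Submodule.norm_sq_eq_add_norm_sq_projection s (S j)
    have hlow : γ * Real.sin α ≤ ‖s - Submodule.orthogonalProjectionOnto (S j) s‖ := by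
      have horth : (‖(Submodule.orthogonalProjectionOnto (S j)ᗮ s : E)‖) =
          ‖s - Submodule.orthogonalProjectionOnto (S j) s‖ := by
        rw [Submodule.orthogonalProjectionOnto_orthogonal]; rfl
      have hsq : (γ * Real.sin α) ^ 2 ≤ ‖s - Submodule.orthogonalProjectionOnto (S j) s‖ ^ 2 := by
        rw [← horth]
        have h1 : (γ * Real.sin α) ^ 2 ≤ (‖s‖ * Real.sin α) ^ 2 :=
          pow_le_pow_left₀ (mul_nonneg hγ.le hsin)
            (mul_le_mul_of_nonneg_right hsγ hsin) 2
        refine h1.trans ?_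
        have hcs : Real.sin α ^ 2 = 1 - Real.cos α ^ 2 := by
          nlinarith [Real.sin_sq_add_cos_sq α]
        have hproj2 : ‖(Submodule.orthogonalProjectionOnto (S j) s : E)‖ ^ 2 ≤ (‖s‖ * Real.cos α) ^ 2 := by
          have h0 : (0:ℝ) ≤ ‖(Submodule.orthogonalProjectionOnto (S j) s : E)‖ := norm_nonneg _
          nlinarith
        have hpyth' : ‖s‖ ^ 2 = ‖(Submodule.orthogonalProjectionOnto (S j) s : E)‖ ^ 2 +
            ‖(Submodule.orthogonalProjectionOnto (S j)ᗮ s : E)‖ ^ 2 := hpyth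
        nlinarith [hpyth', hproj2, hcs]
      exact le_of_pow_le_pow_left₀ two_ne_zero (norm_nonneg _) hsq
    have hdist_s : γ * Real.sin α ≤ Metric.infDist s (S j : Set E) := by
      have hmin : ‖s - (Submodule.orthogonalProjectionOnto (S j) s : E)‖ = ⨅ x : S j, ‖s - x‖ :=
        Submodule.starProjection_minimal (U := S j) s
      rw [Metric.infDist_eq_iInf]
      refine le_ciInf fun w => ?_
      rw [dist_eq_norm]
      refine hlow.trans ?_
      rw [hmin]
      exact ciInf_le ⟨0, by rintro r ⟨w, rfl⟩; exact norm_nonneg _⟩ w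
    have htri := Metric.infDist_le_infDist_add_dist (x := s) (y := z) (s := (S j : Set E))
    have hdz : dist s z = ‖e‖ := by rw [hz, dist_eq_norm]; simp [norm_sub_rev]
    rw [hdz] at htri
    linarith
  refine ⟨h1, h2, fun j hj => ?_⟩
  have := h2 j hj
  linarith
end

section
/- Let E be a finite-dimensional real inner product space, let S_1, …, S_K be linear subspaces of E, and fix a class index y. Let z ∈ E admit a decomposition z = s + e with s ∈ S_y, ‖e‖ ≤ ε, and ‖s‖ ≥ γ > 0, and let α ∈ (0, π/2] be such that for every j ≠ y and every unit vector u ∈ S_y, ‖P_{S_j} u‖ ≤ cos α. If γ · sin α > 2ε, then dist(z, S_y) < dist(z, S_j) for every j ≠ y; that is, the smallest subspace residual is uniquely attained at class y. -/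
/-- **Unique residual minimizer under coverage and separation.**
If `z = s + e` with `s ∈ S_y`, `‖e‖ ≤ ε`, `‖s‖ ≥ γ > 0`, every unit vector `u ∈ S_y`
satisfies `‖P_{S_j} u‖ ≤ cos α` for all `j ≠ y` (with `α ∈ (0, π/2]`), and
`γ sin α > 2ε`, then `dist(z, S_y) < dist(z, S_j)` for every `j ≠ y`. -/
theorem stmt_10 {E : Type*} [NormedAddCommGroup E] [InnerProductSpace ℝ E]
    [FiniteDimensional ℝ E]
    (K : ℕ) (S : Fin K → Submodule ℝ E) (y : Fin K)
    (z s e : E) (ε γ α : ℝ)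
    (hz : z = s + e) (hs : s ∈ S y) (he : ‖e‖ ≤ ε)
    (hγ : 0 < γ) (hsγ : ‖s‖ ≥ γ)
    (hα0 : 0 < α) (hα1 : α ≤ Real.pi / 2)
    (hang : ∀ j, j ≠ y → ∀ u : E, u ∈ S y → ‖u‖ = 1 →
      ‖((S j).orthogonalProjection u : E)‖ ≤ Real.cos α)
    (hmargin : γ * Real.sin α > 2 * ε) :
    ∀ j, j ≠ y →
      Metric.infDist z (S y : Set E) < Metric.infDist z (S j : Set E) := by
  intro j hj
  have hsin : 0 < Real.sin α :=
    Real.sin_pos_of_pos_of_lt_pi hα0 (lt_of_le_of_lt hα1 (by linarith [Real.pi_pos]))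
  have hεnn : 0 ≤ ε := le_trans (norm_nonneg e) he
  have hsne : s ≠ 0 := by
    intro h; rw [h, norm_zero] at hsγ; linarith
  have hsnorm : 0 < ‖s‖ := lt_of_lt_of_le hγ hsγ
  -- upper bound: dist z (S y) ≤ ε
  have hup : Metric.infDist z (S y : Set E) ≤ ε := by
    calc Metric.infDist z (S y : Set E) ≤ dist z s := Metric.infDist_le_dist_of_mem hs
    _ = ‖e‖ := by rw [hz, dist_eq_norm]; simp
    _ ≤ ε := he
  -- projection bound for s
  set P := (S j).orthogonalProjection
  have hPs : ‖(P s : E)‖ ≤ ‖s‖ * Real.cos α := by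
    have hu := hang j hj (‖s‖⁻¹ • s)
      (Submodule.smul_mem _ _ hs) (by rw [norm_smul, norm_inv, norm_norm]; field_simp)
    rw [map_smul] at hu
    have : ‖((‖s‖⁻¹ • P s : S j) : E)‖ = ‖s‖⁻¹ * ‖(P s : E)‖ := by
      rw [Submodule.coe_smul, norm_smul, Real.norm_eq_abs, abs_of_nonneg (by positivity)]
    rw [this] at hu
    calc ‖(P s : E)‖ = ‖s‖ * (‖s‖⁻¹ * ‖(P s : E)‖) := by field_simp
    _ ≤ ‖s‖ * Real.cos α := by
        exact mul_le_mul_of_nonneg_left hu (norm_nonneg s)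
  -- Pythagoras: ‖s‖² = ‖P s‖² + ‖s - P s‖²
  have hpyth : ‖s‖ ^ 2 = ‖(P s : E)‖ ^ 2 + ‖s - (P s : E)‖ ^ 2 := by
    have horth : @inner ℝ _ _ ((P s : E)) (s - (P s : E)) = 0 := by
      have : @inner ℝ _ _ (s - (P s : E)) (P s : E) = 0 :=
        Submodule.starProjection_inner_eq_zero (K := S j) s (P s : E) (P s).2
      rw [real_inner_comm] at this
      simpa using this
    have := norm_add_sq_real (P s : E) (s - (P s : E))
    rw [horth] at this
    simpa using this
  have hcossin : Real.sin α ^ 2 + Real.cos α ^ 2 = 1 := by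
    rw [add_comm]; exact Real.cos_sq_add_sin_sq α
  -- lower bound: ‖s - P s‖ ≥ ‖s‖ sin α
  have hlow : ‖s‖ * Real.sin α ≤ ‖s - (P s : E)‖ := by
    nlinarith [norm_nonneg (s - (P s : E)), norm_nonneg (P s : E), norm_nonneg s]
  -- dist z (S j) ≥ dist s (S j) - ε ≥ γ sin α - ε
  have hdistsj : γ * Real.sin α ≤ Metric.infDist s (S j : Set E) := by
    by_contra hcon
    push_neg at hcon
    obtain ⟨w, hw, hwd⟩ :=
      (Metric.infDist_lt_iff (⟨0, Submodule.zero_mem _⟩ : (S j : Set E).Nonempty)).mp hcon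
    have hmin : ‖s - (P s : E)‖ ≤ ‖s - w‖ := by
      rw [show ‖s - (P s : E)‖ = ⨅ x : S j, ‖s - x‖ from Submodule.starProjection_minimal s]
      exact ciInf_le ⟨0, fun x => by rintro ⟨v, rfl⟩; positivity⟩ (⟨w, hw⟩ : S j)
    have : γ * Real.sin α ≤ dist s w := by
      calc γ * Real.sin α ≤ ‖s‖ * Real.sin α :=
            mul_le_mul_of_nonneg_right hsγ hsin.le
      _ ≤ ‖s - (P s : E)‖ := hlow
      _ ≤ ‖s - w‖ := hmin
      _ = dist s w := (dist_eq_norm s w).symm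
    linarith
  have htri : Metric.infDist s (S j : Set E) ≤ Metric.infDist z (S j : Set E) + dist s z :=
    Metric.infDist_le_infDist_add_dist
  have hdsz : dist s z ≤ ε := by
    rw [hz, dist_eq_norm]; simpa using he
  linarith
end

section
/- Let E be a finite-dimensional real inner product space, let S_1, …, S_K be linear subspaces of E each spanned by an orthonormal family, and fix a class index y with orthonormal basis (u_1, …, u_{d_y}) of S_y. Let z ∈ E admit a decomposition z = s + e with s ∈ S_y, ‖e‖ ≤ ε, and ‖s‖ ≥ γ > 0. Suppose there is η ∈ [0, 1) such that for every j ≠ y, the orthonormal basis (v_1, …, v_{d_j}) of S_j satisfies Σ_i Σ_ℓ ⟨u_i, v_ℓ⟩² ≤ η. Then dist(z, S_y) ≤ ε, for every j ≠ y one has dist(z, S_j) ≥ γ · √(1 − η) − ε, and consequently for every j ≠ y, dist(z, S_j) − dist(z, S_y) ≥ γ · √(1 − η) − 2ε. -/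
open Metric

lemma le_infDist_aux {α : Type*} [MetricSpace α] {s : Set α} (hs : s.Nonempty) {x : α} {b : ℝ}
    (h : ∀ y ∈ s, b ≤ dist x y) : b ≤ Metric.infDist x s := by
  by_contra hlt
  push_neg at hlt
  obtain ⟨y, hy, hdy⟩ := (Metric.infDist_lt_iff hs).1 hlt
  exact absurd (h y hy) (not_le.2 hdy)

lemma mem_orthogonal_span_aux {E : Type*} [NormedAddCommGroup E] [InnerProductSpace ℝ E]
    {ι : Type*} (v : ι → E) (x : E) (h : ∀ i, (inner ℝ (v i) x : ℝ) = 0) :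
    x ∈ (Submodule.span ℝ (Set.range v))ᗮ := by
  rw [Submodule.mem_orthogonal]
  intro u hu
  have hle : Submodule.span ℝ (Set.range v) ≤ LinearMap.ker (innerₛₗ ℝ x) := by
    rw [Submodule.span_le]
    rintro _ ⟨i, rfl⟩
    simp only [SetLike.mem_coe, LinearMap.mem_ker, innerₛₗ_apply_apply]
    rw [real_inner_comm]; exact h i
  have hker := hle hu
  rw [LinearMap.mem_ker, innerₛₗ_apply_apply] at hker
  rw [real_inner_comm]; exact hker

/-- **Repulsion implies subspace margin lower bound.**
Each class subspace `S k` is spanned by an orthonormal family `V k`. If `z = s + e`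
with `s ∈ S_y`, `‖e‖ ≤ ε`, `‖s‖ ≥ γ > 0`, and for every `j ≠ y` the repulsion
penalty satisfies `Σᵢ Σₗ ⟨(V y)ᵢ, (V j)ₗ⟩² ≤ η` with `η ∈ [0,1)`, then
`dist(z, S_y) ≤ ε`, `dist(z, S_j) ≥ γ √(1 − η) − ε` for all `j ≠ y`, and consequently
`dist(z, S_j) − dist(z, S_y) ≥ γ √(1 − η) − 2ε` for all `j ≠ y`. -/
theorem stmt_14 {E : Type*} [NormedAddCommGroup E] [InnerProductSpace ℝ E]
    [FiniteDimensional ℝ E]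
    (K : ℕ) (S : Fin K → Submodule ℝ E)
    (d : Fin K → ℕ) (V : ∀ k, Fin (d k) → E)
    (hortho : ∀ k, Orthonormal ℝ (V k))
    (hspan : ∀ k, S k = Submodule.span ℝ (Set.range (V k)))
    (y : Fin K)
    (z s e : E) (ε γ η : ℝ)
    (hz : z = s + e) (hs : s ∈ S y) (he : ‖e‖ ≤ ε)
    (hγ : 0 < γ) (hsγ : ‖s‖ ≥ γ)
    (hη0 : 0 ≤ η) (hη1 : η < 1)
    (hrep : ∀ j, j ≠ y → ∑ i, ∑ l, (inner ℝ (V y i) (V j l) : ℝ) ^ 2 ≤ η) :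
    Metric.infDist z (S y : Set E) ≤ ε ∧
      (∀ j, j ≠ y →
        Metric.infDist z (S j : Set E) ≥ γ * Real.sqrt (1 - η) - ε) ∧
      (∀ j, j ≠ y →
        Metric.infDist z (S j : Set E) - Metric.infDist z (S y : Set E) ≥
          γ * Real.sqrt (1 - η) - 2 * ε) := by
  have hεnn : (0:ℝ) ≤ ε := le_trans (norm_nonneg e) he
  have h1 : Metric.infDist z (S y : Set E) ≤ ε := by
    calc Metric.infDist z (S y : Set E) ≤ dist z s := Metric.infDist_le_dist_of_mem hs
    _ = ‖e‖ := by rw [dist_eq_norm, hz]; congr 1; abel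
    _ ≤ ε := he
  -- expand s in the orthonormal basis of S y
  set c : Fin (d y) → ℝ := fun i => (inner ℝ (V y i) s : ℝ) with hc
  have hq : s = ∑ i, c i • V y i := by
    set q : E := ∑ i, c i • V y i with hqdef
    have hqmem : q ∈ S y := by
      rw [hspan y]
      exact Submodule.sum_mem _ fun i _ =>
        Submodule.smul_mem _ _ (Submodule.subset_span ⟨i, rfl⟩)
    have hperp : s - q ∈ (Submodule.span ℝ (Set.range (V y)))ᗮ := by
      apply mem_orthogonal_span_aux
      intro i
      rw [inner_sub_right, (hortho y).inner_right_fintype]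
      simp [hc]
    rw [← hspan y] at hperp
    have hsq : s - q ∈ S y := Submodule.sub_mem _ hs hqmem
    have hz0 : (inner ℝ (s - q) (s - q) : ℝ) = 0 :=
      Submodule.inner_right_of_mem_orthogonal hsq hperp
    rw [inner_self_eq_zero, sub_eq_zero] at hz0
    exact hz0
  have hcsum : ∑ i, c i ^ 2 = ‖s‖ ^ 2 := by
    have := (hortho y).inner_sum c c Finset.univ
    rw [← hq] at this
    rw [← real_inner_self_eq_norm_sq, this]
    simp [pow_two]
  -- main bound for j ≠ y
  have key : ∀ j, j ≠ y → Metric.infDist z (S j : Set E) ≥ γ * Real.sqrt (1 - η) - ε := by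
    intro j hj
    set b : Fin (d j) → ℝ := fun l => (inner ℝ s (V j l) : ℝ) with hb
    set p : E := ∑ l, b l • V j l with hp
    have hpmem : p ∈ S j := by
      rw [hspan j]
      exact Submodule.sum_mem _ fun l _ =>
        Submodule.smul_mem _ _ (Submodule.subset_span ⟨l, rfl⟩)
    have hperp : s - p ∈ (S j)ᗮ := by
      rw [hspan j]
      apply mem_orthogonal_span_aux
      intro l
      rw [inner_sub_right, (hortho j).inner_right_fintype]
      rw [real_inner_comm]
      simp [hb]
    -- ‖p‖² = Σ b l ²
    have hpnorm : ‖p‖ ^ 2 = ∑ l, b l ^ 2 := by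
      have := (hortho j).inner_sum b b Finset.univ
      rw [← hp] at this
      rw [← real_inner_self_eq_norm_sq, this]
      simp [pow_two]
    -- b l = Σ_i c i ⟪u i, v l⟫
    have hbl : ∀ l, b l = ∑ i, c i * (inner ℝ (V y i) (V j l) : ℝ) := by
      intro l
      rw [hb]
      simp only
      conv_lhs => rw [hq]
      rw [sum_inner]
      refine Finset.sum_congr rfl fun i _ => ?_
      rw [real_inner_smul_left]
    -- Cauchy–Schwarz per l
    have hb_sq : ∀ l, b l ^ 2 ≤ ‖s‖ ^ 2 * ∑ i, (inner ℝ (V y i) (V j l) : ℝ) ^ 2 := by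
      intro l
      rw [hbl l, ← hcsum]
      exact Finset.sum_mul_sq_le_sq_mul_sq _ _ _
    have hsum_b : ∑ l, b l ^ 2 ≤ ‖s‖ ^ 2 * η := by
      calc ∑ l, b l ^ 2 ≤ ∑ l, ‖s‖ ^ 2 * ∑ i, (inner ℝ (V y i) (V j l) : ℝ) ^ 2 :=
            Finset.sum_le_sum fun l _ => hb_sq l
      _ = ‖s‖ ^ 2 * ∑ l, ∑ i, (inner ℝ (V y i) (V j l) : ℝ) ^ 2 := by
            rw [Finset.mul_sum]
      _ = ‖s‖ ^ 2 * ∑ i, ∑ l, (inner ℝ (V y i) (V j l) : ℝ) ^ 2 := by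
            rw [Finset.sum_comm]
      _ ≤ ‖s‖ ^ 2 * η := by
            have := hrep j hj
            exact mul_le_mul_of_nonneg_left this (sq_nonneg _)
    -- ‖s - p‖² = ‖s‖² - ‖p‖²
    have hip : (inner ℝ (s - p) p : ℝ) = 0 :=
      Submodule.inner_left_of_mem_orthogonal hpmem hperp
    have hsp_sq : ‖s - p‖ ^ 2 = ‖s‖ ^ 2 - ‖p‖ ^ 2 := by
      have hpyth : ‖s‖ ^ 2 = ‖s - p‖ ^ 2 + ‖p‖ ^ 2 := by
        have hd : s = (s - p) + p := by abel
        calc ‖s‖ ^ 2 = ‖(s - p) + p‖ ^ 2 := by rw [← hd]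
        _ = ‖s - p‖ ^ 2 + 2 * (inner ℝ (s - p) p : ℝ) + ‖p‖ ^ 2 := norm_add_sq_real _ _
        _ = ‖s - p‖ ^ 2 + ‖p‖ ^ 2 := by rw [hip]; ring
      linarith
    have hsp_lb : ‖s - p‖ ^ 2 ≥ γ ^ 2 * (1 - η) := by
      have hγs : γ ^ 2 ≤ ‖s‖ ^ 2 := by
        have := pow_le_pow_left₀ hγ.le hsγ 2
        linarith
      have : ‖s‖ ^ 2 * (1 - η) ≤ ‖s - p‖ ^ 2 := by
        rw [hsp_sq, hpnorm]; nlinarith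
      nlinarith
    have hsqrt : γ * Real.sqrt (1 - η) ≤ ‖s - p‖ := by
      have h1η : (0:ℝ) ≤ 1 - η := by linarith
      have hnn : (0:ℝ) ≤ γ * Real.sqrt (1 - η) :=
        mul_nonneg hγ.le (Real.sqrt_nonneg _)
      have hsq : (γ * Real.sqrt (1 - η)) ^ 2 ≤ ‖s - p‖ ^ 2 := by
        rw [mul_pow, Real.sq_sqrt h1η]
        exact hsp_lb
      have hmono := Real.sqrt_le_sqrt hsq
      rwa [Real.sqrt_sq hnn, Real.sqrt_sq (norm_nonneg _)] at hmono
    -- now bound the infDist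
    apply le_infDist_aux ⟨0, (S j).zero_mem⟩
    intro w hw
    have hsw : ‖s - p‖ ≤ ‖s - w‖ := by
      have hpw : p - w ∈ S j := Submodule.sub_mem _ hpmem hw
      have hiz : (inner ℝ (s - p) (p - w) : ℝ) = 0 :=
        Submodule.inner_left_of_mem_orthogonal hpw hperp
      have hdecomp : s - w = (s - p) + (p - w) := by abel
      have hsq2 : ‖s - p‖ ^ 2 ≤ ‖s - w‖ ^ 2 := by
        have hexp : ‖s - w‖ ^ 2 = ‖s - p‖ ^ 2 + 2 * (inner ℝ (s - p) (p - w) : ℝ) + ‖p - w‖ ^ 2 := by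
          rw [hdecomp]; exact norm_add_sq_real _ _
        rw [hexp, hiz]
        nlinarith [sq_nonneg ‖p - w‖]
      have hmono := Real.sqrt_le_sqrt hsq2
      rwa [Real.sqrt_sq (norm_nonneg _), Real.sqrt_sq (norm_nonneg _)] at hmono
    have hzw : ‖s - w‖ ≤ dist z w + ε := by
      have : s - w = (z - w) - e := by rw [hz]; abel
      rw [this, dist_eq_norm]
      calc ‖z - w - e‖ ≤ ‖z - w‖ + ‖e‖ := norm_sub_le _ _
      _ ≤ ‖z - w‖ + ε := by linarith
    linarith
  refine ⟨h1, key, fun j hj => ?_⟩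
  have := key j hj
  linarith
end
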